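/- Theorem 1 (asymptotic convergence of the thrust-MRAC tracking error): let b > 0, Γ_t > 0, let L_t be a symmetric positive-definite 3×3 real matrix, let t_d : ℝ → ℝ³ be continuous and bounded, and let e_v : ℝ → ℝ³ and k̃_t : ℝ → ℝ be continuously differentiable functions satisfying, for all t ≥ 0, ė_v = −L_t e_v + b k̃_t t_d and k̃'_t = −Γ_t ⟪e_v, t_d⟫. Then e_v(t) → 0 as t → ∞. -/

import Mathlib

open Matrix

open Set

lemma dot_cont : Continuous (fun p : (Fin 3 → ℝ) × (Fin 3 → ℝ) => p.1 ⬝ᵥ p.2) := by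
  simp only [dotProduct]
  exact continuous_finset_sum _ fun i _ =>
    ((continuous_apply i).comp continuous_fst).mul ((continuous_apply i).comp continuous_snd)

lemma quad_cont (L : Matrix (Fin 3) (Fin 3) ℝ) :
    Continuous (fun x : Fin 3 → ℝ => x ⬝ᵥ (L *ᵥ x)) := by
  simp only [dotProduct, Matrix.mulVec]
  continuity

lemma dot_self_nonneg (x : Fin 3 → ℝ) : 0 ≤ x ⬝ᵥ x := by
  simp only [dotProduct, ← sq]
  positivity

lemma dot_self_eq_zero' {x : Fin 3 → ℝ} (h : x ⬝ᵥ x = 0) : x = 0 := by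
  funext i
  have h2 : ∀ j ∈ Finset.univ, (0:ℝ) ≤ x j * x j := fun j _ => mul_self_nonneg _
  have := (Finset.sum_eq_zero_iff_of_nonneg h2).1 h i (Finset.mem_univ i)
  simpa [mul_self_eq_zero] using this

lemma posdef_quad_lb (L : Matrix (Fin 3) (Fin 3) ℝ) (hL : L.PosDef) :
    ∃ μ > 0, ∀ x : Fin 3 → ℝ, μ * (x ⬝ᵥ x) ≤ x ⬝ᵥ (L *ᵥ x) := by
  have hQpos : ∀ x : Fin 3 → ℝ, x ≠ 0 → 0 < x ⬝ᵥ (L *ᵥ x) := by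
    intro x hx
    simpa using hL.dotProduct_mulVec_pos hx
  set S : Set (Fin 3 → ℝ) := {x | x ⬝ᵥ x = 1} with hS
  have hScl : IsClosed S := isClosed_eq (by continuity : Continuous fun x : Fin 3 → ℝ => x ⬝ᵥ x) continuous_const
  have hSb : Bornology.IsBounded S := by
    apply Metric.isBounded_iff_subset_closedBall (0 : Fin 3 → ℝ) |>.2
    refine ⟨1, fun x hx => ?_⟩
    simp only [Metric.mem_closedBall, dist_zero_right]
    apply pi_norm_le_iff_of_nonneg zero_le_one |>.2
    intro i
    rw [Real.norm_eq_abs, abs_le]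
    have h1 : x i * x i ≤ x ⬝ᵥ x := by
      simpa [dotProduct] using
        Finset.single_le_sum (fun j (_ : j ∈ Finset.univ) => mul_self_nonneg (x j))
          (Finset.mem_univ i)
    have h2 : x ⬝ᵥ x = 1 := hx
    constructor <;> nlinarith
  have hSc : IsCompact S := Metric.isCompact_iff_isClosed_bounded.2 ⟨hScl, hSb⟩
  have hSne : S.Nonempty := by
    refine ⟨![1,0,0], ?_⟩
    simp [hS, dotProduct, Fin.sum_univ_three]
  obtain ⟨z, hzS, hz⟩ := hSc.exists_isMinOn hSne (quad_cont L).continuousOn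
  have hzne : z ≠ 0 := by
    intro h; rw [h] at hzS; simp [hS, dotProduct] at hzS
  refine ⟨z ⬝ᵥ (L *ᵥ z), hQpos z hzne, fun x => ?_⟩
  rcases eq_or_ne x 0 with rfl | hx
  · simp
  · have hxx : 0 < x ⬝ᵥ x := lt_of_le_of_ne (dot_self_nonneg x) (fun h => hx (dot_self_eq_zero' h.symm))
    set c : ℝ := Real.sqrt (x ⬝ᵥ x) with hc
    have hcpos : 0 < c := Real.sqrt_pos.2 hxx
    have hc2 : c * c = x ⬝ᵥ x := Real.mul_self_sqrt (le_of_lt hxx)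
    have hcne : c ≠ 0 := ne_of_gt hcpos
    have hyS : (c⁻¹ • x) ∈ S := by
      have hd : (c⁻¹ • x) ⬝ᵥ (c⁻¹ • x) = c⁻¹ * (c⁻¹ * (x ⬝ᵥ x)) := by
        rw [smul_dotProduct, dotProduct_smul]; simp [smul_eq_mul]
      simp only [hS, mem_setOf_eq, hd, ← hc2]
      field_simp
    rw [isMinOn_iff] at hz
    have hscale : (c⁻¹ • x) ⬝ᵥ (L *ᵥ (c⁻¹ • x)) = c⁻¹ * c⁻¹ * (x ⬝ᵥ (L *ᵥ x)) := by
      rw [Matrix.mulVec_smul, smul_dotProduct, dotProduct_smul]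
      simp [smul_eq_mul]; ring
    have h1 : z ⬝ᵥ (L *ᵥ z) ≤ c⁻¹ * c⁻¹ * (x ⬝ᵥ (L *ᵥ x)) := by
      rw [← hscale]; exact hz _ hyS
    have h2 : (z ⬝ᵥ (L *ᵥ z)) * (c * c) ≤ x ⬝ᵥ (L *ᵥ x) := by
      calc (z ⬝ᵥ (L *ᵥ z)) * (c * c)
          ≤ (c⁻¹ * c⁻¹ * (x ⬝ᵥ (L *ᵥ x))) * (c * c) :=
            mul_le_mul_of_nonneg_right h1 (mul_pos hcpos hcpos).le
        _ = x ⬝ᵥ (L *ᵥ x) := by field_simp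
    rw [hc2] at h2
    linarith

lemma hasDerivAt_dot {f g : ℝ → Fin 3 → ℝ} {f' g' : Fin 3 → ℝ} {t : ℝ}
    (hf : HasDerivAt f f' t) (hg : HasDerivAt g g' t) :
    HasDerivAt (fun s => f s ⬝ᵥ g s) (f' ⬝ᵥ g t + f t ⬝ᵥ g') t := by
  have h := HasDerivAt.fun_sum (u := Finset.univ)
    (fun i (_ : i ∈ Finset.univ) => ((hasDerivAt_pi.1 hf i).mul (hasDerivAt_pi.1 hg i)))
  have heq : f' ⬝ᵥ g t + f t ⬝ᵥ g' = ∑ i : Fin 3, (f' i * g t i + f t i * g' i) := by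
    simp [dotProduct, Finset.sum_add_distrib]
  rw [heq]
  exact h

lemma dot_abs_le {x y : Fin 3 → ℝ} {R S : ℝ} (hx : ∀ i, |x i| ≤ R) (hy : ∀ i, |y i| ≤ S)
    (hR : 0 ≤ R) : |x ⬝ᵥ y| ≤ 3 * (R * S) := by
  have h1 : |x ⬝ᵥ y| ≤ ∑ i : Fin 3, |x i * y i| := Finset.abs_sum_le_sum_abs _ _
  have h2 : ∑ i : Fin 3, |x i * y i| ≤ ∑ _i : Fin 3, R * S :=
    Finset.sum_le_sum fun i _ => by
      rw [abs_mul]; exact mul_le_mul (hx i) (hy i) (abs_nonneg _) hR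
  have h3 : ∑ _i : Fin 3, R * S = 3 * (R * S) := by
    simp [Finset.sum_const]
  linarith

lemma mulVec_abs_le (L : Matrix (Fin 3) (Fin 3) ℝ) {x : Fin 3 → ℝ} {R : ℝ}
    (hx : ∀ i, |x i| ≤ R) (hR : 0 ≤ R) (i : Fin 3) :
    |(L *ᵥ x) i| ≤ (∑ a, ∑ c, |L a c|) * (3 * R) := by
  set A := ∑ a, ∑ c, |L a c| with hA
  have hAnn : ∀ a c, |L a c| ≤ A := by
    intro a c
    have h1 : |L a c| ≤ ∑ c', |L a c'| :=
      Finset.single_le_sum (fun j _ => abs_nonneg (L a j)) (Finset.mem_univ c)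
    have h2 : ∑ c', |L a c'| ≤ A :=
      Finset.single_le_sum (f := fun a' => ∑ c', |L a' c'|)
        (fun a' _ => Finset.sum_nonneg fun j _ => abs_nonneg _) (Finset.mem_univ a)
    linarith
  have hA0 : 0 ≤ A := le_trans (abs_nonneg _) (hAnn i i)
  have h1 : |(L *ᵥ x) i| ≤ ∑ j : Fin 3, |L i j * x j| := by
    simp only [Matrix.mulVec, dotProduct]
    exact Finset.abs_sum_le_sum_abs _ _
  have h2 : ∑ j : Fin 3, |L i j * x j| ≤ ∑ _j : Fin 3, A * R :=
    Finset.sum_le_sum fun j _ => by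
      rw [abs_mul]; exact mul_le_mul (hAnn i j) (hx j) (abs_nonneg _) hA0
  have h3 : ∑ _j : Fin 3, A * R = A * (3 * R) := by
    simp [Finset.sum_const]; ring
  linarith

/-- Theorem 1: asymptotic convergence of the thrust-MRAC tracking error
`e_v(t) → 0` as `t → ∞`. -/
theorem thrust_mrac_asymptotic_convergence
    (b Γt : ℝ) (hb : 0 < b) (hΓ : 0 < Γt)
    (Lt : Matrix (Fin 3) (Fin 3) ℝ) (hLt : Lt.PosDef)
    (td : ℝ → Fin 3 → ℝ) (htdc : Continuous td) (htdb : ∃ C, ∀ t, ‖td t‖ ≤ C)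
    (e : ℝ → Fin 3 → ℝ) (kt : ℝ → ℝ)
    (he : ContDiff ℝ 1 e) (hk : ContDiff ℝ 1 kt)
    (hde : ∀ t ≥ (0:ℝ), deriv e t = -(Lt *ᵥ e t) + (b * kt t) • td t)
    (hdk : ∀ t ≥ (0:ℝ), deriv kt t = -(Γt * (e t ⬝ᵥ td t))) :
    Filter.Tendsto e Filter.atTop (nhds 0) := by
  obtain ⟨C, hC⟩ := htdb
  set C' : ℝ := max C 0 with hC'
  have hC'0 : 0 ≤ C' := le_max_right _ _
  have htd_abs : ∀ t i, |td t i| ≤ C' := by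
    intro t i
    calc |td t i| = ‖td t i‖ := rfl
      _ ≤ ‖td t‖ := norm_le_pi_norm (td t) i
      _ ≤ C := hC t
      _ ≤ C' := le_max_left _ _
  have hediff : Differentiable ℝ e := he.differentiable one_ne_zero
  have hkdiff : Differentiable ℝ kt := hk.differentiable one_ne_zero
  have hee : ∀ t, HasDerivAt e (deriv e t) t := fun t => (hediff t).hasDerivAt
  have hkk : ∀ t, HasDerivAt kt (deriv kt t) t := fun t => (hkdiff t).hasDerivAt
  have hec : Continuous e := he.continuous
  have hkc : Continuous kt := hk.continuous
  -- W = squared (euclidean) norm of e, Q = quadratic form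
  set W : ℝ → ℝ := fun t => e t ⬝ᵥ e t with hW
  set Q : ℝ → ℝ := fun t => e t ⬝ᵥ (Lt *ᵥ e t) with hQ
  have hWcont : Continuous W := by
    have : Continuous fun t => ((e t, e t) : (Fin 3 → ℝ) × (Fin 3 → ℝ)) := hec.prodMk hec
    exact dot_cont.comp this
  have hQcont : Continuous Q := (quad_cont Lt).comp hec
  have hWnonneg : ∀ t, 0 ≤ W t := fun t => dot_self_nonneg (e t)
  obtain ⟨μ, hμpos, hμ⟩ := posdef_quad_lb Lt hLt
  have hQnonneg : ∀ t, 0 ≤ Q t := fun t =>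
    le_trans (mul_nonneg hμpos.le (hWnonneg t)) (hμ (e t))
  have hμWQ : ∀ t, μ * W t ≤ Q t := fun t => hμ (e t)
  have hWsq : ∀ t i, e t i * e t i ≤ W t := by
    intro t i
    simpa [hW, dotProduct] using
      Finset.single_le_sum (fun j (_ : j ∈ Finset.univ) => mul_self_nonneg (e t j))
        (Finset.mem_univ i)
  -- Lyapunov function
  set V : ℝ → ℝ := fun t => (1/2) * W t + (b/(2*Γt)) * (kt t * kt t) with hV
  have hWd : ∀ t, HasDerivAt W (deriv e t ⬝ᵥ e t + e t ⬝ᵥ deriv e t) t := fun t =>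
    hasDerivAt_dot (hee t) (hee t)
  have hVd : ∀ t, 0 ≤ t → HasDerivAt V (-(Q t)) t := by
    intro t ht
    have h2 : HasDerivAt (fun s => kt s * kt s)
        (deriv kt t * kt t + kt t * deriv kt t) t := (hkk t).mul (hkk t)
    have h3 := ((hWd t).const_mul (1/2 : ℝ)).add (h2.const_mul (b/(2*Γt)))
    have heq : (1/2 : ℝ) * (deriv e t ⬝ᵥ e t + e t ⬝ᵥ deriv e t)
        + (b/(2*Γt)) * (deriv kt t * kt t + kt t * deriv kt t) = -(Q t) := by
      rw [hde t ht, hdk t ht, dotProduct_comm]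
      have hdot : e t ⬝ᵥ (-(Lt *ᵥ e t) + (b * kt t) • td t)
          = -(e t ⬝ᵥ (Lt *ᵥ e t)) + (b * kt t) * (e t ⬝ᵥ td t) := by
        rw [dotProduct_add, dotProduct_neg, dotProduct_smul]
        simp [smul_eq_mul]
      rw [hdot, hQ]
      field_simp
      ring
    rw [← heq]
    exact h3
  have hVcont : Continuous V :=
    (continuous_const.mul hWcont).add (continuous_const.mul (hkc.mul hkc))
  have hV0 : V 0 = (1/2) * W 0 + (b/(2*Γt)) * (kt 0 * kt 0) := rfl
  clear_value V W Q
  -- V is nonincreasing on [0, ∞)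
  have hVanti : AntitoneOn V (Set.Ici (0:ℝ)) := by
    apply antitoneOn_of_deriv_nonpos (convex_Ici 0) hVcont.continuousOn
    · intro x hx
      rw [interior_Ici] at hx
      exact ((hVd x (le_of_lt hx)).differentiableAt).differentiableWithinAt
    · intro x hx
      rw [interior_Ici] at hx
      rw [(hVd x (le_of_lt hx)).deriv]
      exact neg_nonpos.2 (hQnonneg x)
  have hVnonneg : ∀ t, 0 ≤ V t := by
    intro t
    have h1 : 0 ≤ (1/2 : ℝ) * W t := mul_nonneg (by norm_num) (hWnonneg t)
    have h2 : 0 ≤ (b/(2*Γt)) * (kt t * kt t) := mul_nonneg (by positivity) (mul_self_nonneg _)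
    simp only [hV]; linarith
  have hVle : ∀ t, 0 ≤ t → V t ≤ V 0 := fun t ht =>
    hVanti Set.self_mem_Ici ht ht
  have hWle : ∀ t, 0 ≤ t → W t ≤ 2 * V 0 := by
    intro t ht
    have h2 : 0 ≤ (b/(2*Γt)) * (kt t * kt t) := mul_nonneg (by positivity) (mul_self_nonneg _)
    have hVt : V t = (1/2) * W t + (b/(2*Γt)) * (kt t * kt t) := by rw [hV]
    have := hVle t ht
    linarith
  have hkle : ∀ t, 0 ≤ t → kt t * kt t ≤ (2*Γt/b) * V 0 := by
    intro t ht
    have h1 : 0 ≤ (1/2 : ℝ) * W t := mul_nonneg (by norm_num) (hWnonneg t)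
    have hVt : V t = (1/2) * W t + (b/(2*Γt)) * (kt t * kt t) := by rw [hV]
    have := hVle t ht
    rw [div_mul_eq_mul_div, le_div_iff₀ hb]
    have hΓ' : (0:ℝ) < 2*Γt := by linarith
    have key : b/(2*Γt) * (kt t * kt t) ≤ V 0 := by linarith
    calc kt t * kt t * b = (b/(2*Γt) * (kt t * kt t)) * (2*Γt) := by field_simp
      _ ≤ V 0 * (2*Γt) := mul_le_mul_of_nonneg_right key hΓ'.le
      _ = 2*Γt*(V 0) := by ring
  -- uniform bounds on |e|, |kt|
  set R : ℝ := Real.sqrt (2 * V 0) with hRdef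
  have hR0 : 0 ≤ R := Real.sqrt_nonneg _
  have heabs : ∀ t, 0 ≤ t → ∀ i, |e t i| ≤ R := by
    intro t ht i
    have h1 : e t i * e t i ≤ 2 * V 0 := le_trans (hWsq t i) (hWle t ht)
    calc |e t i| = Real.sqrt (e t i * e t i) := (Real.sqrt_mul_self_eq_abs _).symm
      _ ≤ R := Real.sqrt_le_sqrt h1
  set K : ℝ := Real.sqrt ((2*Γt/b) * V 0) with hKdef
  have hK0 : 0 ≤ K := Real.sqrt_nonneg _
  have hkabs : ∀ t, 0 ≤ t → |kt t| ≤ K := by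
    intro t ht
    calc |kt t| = Real.sqrt (kt t * kt t) := (Real.sqrt_mul_self_eq_abs _).symm
      _ ≤ K := Real.sqrt_le_sqrt (hkle t ht)
  set A : ℝ := ∑ a, ∑ c, |Lt a c| with hAdef
  set S : ℝ := A * (3*R) + b * K * C' with hSdef
  have hA0 : 0 ≤ A :=
    Finset.sum_nonneg fun a _ => Finset.sum_nonneg fun c _ => abs_nonneg _
  have hS0 : 0 ≤ S := by
    have : 0 ≤ A * (3*R) := mul_nonneg hA0 (by linarith)
    have : 0 ≤ b * K * C' := mul_nonneg (mul_nonneg hb.le hK0) hC'0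
    simp only [hSdef]; positivity
  have hde_abs : ∀ t, 0 ≤ t → ∀ i, |deriv e t i| ≤ S := by
    intro t ht i
    rw [hde t ht]
    have hco : (-(Lt *ᵥ e t) + (b * kt t) • td t) i
        = -((Lt *ᵥ e t) i) + (b * kt t) * td t i := rfl
    rw [hco]
    have h1 := mulVec_abs_le Lt (heabs t ht) hR0 i
    have h2 : |(b * kt t) * td t i| ≤ b * K * C' := by
      rw [abs_mul, abs_mul, abs_of_pos hb]
      exact mul_le_mul (mul_le_mul le_rfl (hkabs t ht) (abs_nonneg _) hb.le)
        (htd_abs t i) (abs_nonneg _) (mul_nonneg hb.le hK0)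
    calc |-((Lt *ᵥ e t) i) + (b * kt t) * td t i|
        ≤ |(-((Lt *ᵥ e t) i))| + |(b * kt t) * td t i| := abs_add_le _ _
      _ = |(Lt *ᵥ e t) i| + |(b * kt t) * td t i| := by rw [abs_neg]
      _ ≤ A * (3*R) + b * K * C' := add_le_add h1 h2
      _ = S := hSdef.symm
  set M : ℝ := 6 * (R * S) + 1 with hMdef
  have hM0 : (0:ℝ) < M := by
    have : 0 ≤ R * S := mul_nonneg hR0 hS0
    simp only [hMdef]; linarith
  have hW'bound : ∀ t, 0 ≤ t → |deriv e t ⬝ᵥ e t + e t ⬝ᵥ deriv e t| ≤ M := by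
    intro t ht
    have h1 : |deriv e t ⬝ᵥ e t| ≤ 3 * (S * R) := dot_abs_le (hde_abs t ht) (heabs t ht) hS0
    have h2 : |e t ⬝ᵥ deriv e t| ≤ 3 * (R * S) := dot_abs_le (heabs t ht) (hde_abs t ht) hR0
    have hcomm : S * R = R * S := mul_comm _ _
    calc |deriv e t ⬝ᵥ e t + e t ⬝ᵥ deriv e t|
        ≤ |deriv e t ⬝ᵥ e t| + |e t ⬝ᵥ deriv e t| := abs_add_le _ _
      _ ≤ M := by rw [hMdef]; linarith
  clear_value R K A S M
  -- fundamental theorem of calculus for V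
  have hFTC : ∀ t, 0 ≤ t → ∫ τ in (0:ℝ)..t, Q τ = V 0 - V t := by
    intro t ht
    have hd : ∀ x ∈ Set.uIcc (0:ℝ) t, HasDerivAt V (-(Q x)) x := by
      intro x hx
      rw [Set.uIcc_of_le ht] at hx
      exact hVd x hx.1
    have h := intervalIntegral.integral_eq_sub_of_hasDerivAt hd
      ((hQcont.neg).intervalIntegrable _ _)
    rw [intervalIntegral.integral_neg] at h
    linarith
  -- the primitive of W is monotone and bounded
  have hFmono : Monotone (fun t => ∫ τ in (0:ℝ)..t, W τ) := by
    intro s t hst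
    have hadd := intervalIntegral.integral_add_adjacent_intervals
      (hWcont.intervalIntegrable (μ := MeasureTheory.volume) 0 s)
      (hWcont.intervalIntegrable (μ := MeasureTheory.volume) s t)
    have hpos : 0 ≤ ∫ τ in s..t, W τ :=
      intervalIntegral.integral_nonneg hst (fun u _ => hWnonneg u)
    simp only
    linarith
  have hFbdd : ∀ t, (∫ τ in (0:ℝ)..t, W τ) ≤ V 0 / μ := by
    intro t
    have hdiv0 : (0:ℝ) ≤ V 0 / μ := div_nonneg (hVnonneg 0) hμpos.le
    rcases le_total t 0 with h | h
    · have h1 := hFmono h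
      simp only at h1
      rw [intervalIntegral.integral_same] at h1
      linarith
    · have hmono := intervalIntegral.integral_mono_on (a := 0) (b := t)
        (μ := MeasureTheory.volume) h
        ((continuous_const.mul hWcont).intervalIntegrable 0 t)
        (hQcont.intervalIntegrable 0 t)
        (fun x _ => hμWQ x)
      have h2 : ∫ τ in (0:ℝ)..t, μ * W τ = μ * ∫ τ in (0:ℝ)..t, W τ :=
        intervalIntegral.integral_const_mul μ W
      have h3 := hFTC t h
      have h4 : μ * (∫ τ in (0:ℝ)..t, W τ) ≤ V 0 := by
        rw [← h2]
        calc ∫ τ in (0:ℝ)..t, μ * W τ ≤ ∫ τ in (0:ℝ)..t, Q τ := hmono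
          _ = V 0 - V t := h3
          _ ≤ V 0 := by linarith [hVnonneg t]
      rw [le_div_iff₀ hμpos]
      linarith [h4, mul_comm μ (∫ τ in (0:ℝ)..t, W τ)]
  have hFbddAbove : BddAbove (Set.range (fun t => ∫ τ in (0:ℝ)..t, W τ)) := by
    refine ⟨V 0 / μ, ?_⟩
    rintro y ⟨t, rfl⟩
    exact hFbdd t
  have hFtend := tendsto_atTop_ciSup hFmono hFbddAbove
  set l : ℝ := ⨆ t, ∫ τ in (0:ℝ)..t, W τ with hldef
  clear_value l
  -- W tends to zero
  have hWtend : Filter.Tendsto W Filter.atTop (nhds 0) := by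
    rw [Metric.tendsto_atTop]
    intro ε hε
    set δ : ℝ := ε / (2*M) with hδdef
    have hδ0 : 0 < δ := by rw [hδdef]; positivity
    clear_value δ
    have hshift : Filter.Tendsto (fun t => ∫ τ in (0:ℝ)..(t+δ), W τ)
        Filter.atTop (nhds l) :=
      hFtend.comp (Filter.tendsto_atTop_add_const_right _ δ Filter.tendsto_id)
    have hdiff : Filter.Tendsto
        (fun t => (∫ τ in (0:ℝ)..(t+δ), W τ) - (∫ τ in (0:ℝ)..t, W τ))
        Filter.atTop (nhds (l - l)) := hshift.sub hFtend
    rw [sub_self] at hdiff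
    have hev : ∀ᶠ t in Filter.atTop,
        (∫ τ in (0:ℝ)..(t+δ), W τ) - (∫ τ in (0:ℝ)..t, W τ) < δ * (ε/2) :=
      hdiff.eventually_lt_const (by positivity)
    obtain ⟨N, hN⟩ := Filter.eventually_atTop.1 (hev.and (Filter.eventually_ge_atTop (0:ℝ)))
    refine ⟨N, fun t htN => ?_⟩
    obtain ⟨h1, h2⟩ := hN t htN
    rw [Real.dist_eq, sub_zero, abs_of_nonneg (hWnonneg t)]
    by_contra hcon
    push_neg at hcon
    have hδt : t ≤ t + δ := by linarith
    have hMδ2 : M * δ = ε/2 := by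
      rw [hδdef]; field_simp
    have hseg : ∀ x ∈ Set.Icc t (t+δ), ε/2 ≤ W x := by
      intro x hx
      have hlip := norm_image_sub_le_of_norm_deriv_le_segment'
        (f := W) (f' := fun τ => deriv e τ ⬝ᵥ e τ + e τ ⬝ᵥ deriv e τ) (C := M)
        (fun y hy => (hWd y).hasDerivWithinAt)
        (fun y hy => by rw [Real.norm_eq_abs]; exact hW'bound y (le_trans h2 hy.1))
        x hx
      rw [Real.norm_eq_abs] at hlip
      have habs := (abs_le.1 hlip).1
      have hxt : x - t ≤ δ := by linarith [hx.2]
      have hx0 : M * (x - t) ≤ M * δ := mul_le_mul_of_nonneg_left hxt hM0.le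
      linarith
    have hint : δ * (ε/2) ≤ ∫ τ in t..(t+δ), W τ := by
      have hmono2 := intervalIntegral.integral_mono_on (a := t) (b := t+δ)
        (μ := MeasureTheory.volume) hδt
        (intervalIntegrable_const (c := ε/2))
        (hWcont.intervalIntegrable t (t+δ)) hseg
      rw [intervalIntegral.integral_const] at hmono2
      have : (t + δ - t) • (ε/2) = δ * (ε/2) := by
        rw [smul_eq_mul]; ring_nf
      linarith [hmono2, this]
    have hadd := intervalIntegral.integral_add_adjacent_intervals
      (hWcont.intervalIntegrable (μ := MeasureTheory.volume) 0 t)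
      (hWcont.intervalIntegrable (μ := MeasureTheory.volume) t (t+δ))
    linarith
  -- conclude
  apply squeeze_zero_norm (a := fun t => Real.sqrt (W t))
  · intro t
    apply (pi_norm_le_iff_of_nonneg (Real.sqrt_nonneg _)).2
    intro i
    rw [Real.norm_eq_abs]
    calc |e t i| = Real.sqrt (e t i * e t i) := (Real.sqrt_mul_self_eq_abs _).symm
      _ ≤ Real.sqrt (W t) := Real.sqrt_le_sqrt (hWsq t i)
  · have hc := (Real.continuous_sqrt.tendsto 0).comp hWtend
    rwa [Real.sqrt_zero] at hc
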